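/- Let d ≥ 1, let α, β ⊢ d be partitions, and let 0 ≤ s ≤ r be integers. In the group algebra ℂ[S(d)], let J_y = Σ_{x<y} (x y) be the Jucys–Murphy elements, let C_α and C_β be the sums of all permutations of cycle type α and β respectively, and let h_k denote the complete homogeneous symmetric polynomial of degree k in d variables (the J_y commute, so h_k(J_1,…,J_d) is well defined). Then the coefficient of the identity permutation in the element C_α · h_s(J_1,…,J_d) · h_{r−s}(J_1,…,J_d) · C_β equals W⃗^r(α,β;s), the number of two-legged monotone r-step walks from cycle type α to cycle type β with reset at time s. -/

import Mathlib

open scoped Classical Nat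

noncomputable section

/-! ### Monotone walks on the symmetric group and monotone Hurwitz numbers -/

/-- `σ` has cycle type `α ⊢ d`: the parts of `α` are the cycle lengths of `σ`,
including one part equal to `1` for each fixed point. -/
def HasCycleType {d : ℕ} (σ : Equiv.Perm (Fin d)) (α : d.Partition) : Prop :=
  σ.cycleType + Multiset.replicate (d - σ.cycleType.sum) 1 = α.parts

/-- The subgroup generated by `σ` and the `τ i` acts transitively on `{1,…,d}`. -/
def TransitiveTuple {d r : ℕ} (σ : Equiv.Perm (Fin d)) (τ : Fin r → Equiv.Perm (Fin d)) : Prop :=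
  ∀ x y : Fin d, ∃ g ∈ Subgroup.closure ({σ} ∪ Set.range τ), g x = y

/-- A two-legged monotone `r`-step walk from cycle type `α` to cycle type `β` with reset
at time `s`: a tuple `(σ, τ₁, …, τ_r)` where `σ` has cycle type `α`, each `τ_i` is encoded
as a pair `(x_i, y_i)` with `x_i < y_i` (the transposition `(x_i y_i)` with mark `y_i`),
the marks satisfy `y₁ ≤ … ≤ y_s` and `y_{s+1} ≤ … ≤ y_r`, and `τ_r ⋯ τ₁ σ` has cycle
type `β`. -/
def IsTwoLegWalk {d : ℕ} (r s : ℕ) (α β : d.Partition)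
    (σ : Equiv.Perm (Fin d)) (τ : Fin r → Fin d × Fin d) : Prop :=
  HasCycleType σ α ∧
  (∀ i, (τ i).1 < (τ i).2) ∧
  (∀ i j : Fin r, i ≤ j → ((j : ℕ) < s ∨ s ≤ (i : ℕ)) → (τ i).2 ≤ (τ j).2) ∧
  HasCycleType ((List.ofFn (fun i => Equiv.swap (τ i).1 (τ i).2)).reverse.prod * σ) β

/-- The two-legged monotone walk count `W⃗^r(α,β;s)`. -/
noncomputable def Wcount (d r s : ℕ) (α β : d.Partition) : ℕ :=
  Nat.card {w : Equiv.Perm (Fin d) × (Fin r → Fin d × Fin d) //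
    IsTwoLegWalk r s α β w.1 w.2}

/-- The connected (transitive) two-legged monotone walk count `H⃗^r(α,β;s)`. -/
noncomputable def Hcount (d r s : ℕ) (α β : d.Partition) : ℕ :=
  Nat.card {w : Equiv.Perm (Fin d) × (Fin r → Fin d × Fin d) //
    IsTwoLegWalk r s α β w.1 w.2 ∧
    TransitiveTuple w.1 (fun i => Equiv.swap ((w.2 i).1) ((w.2 i).2))}

/-- The connected two-legged monotone double Hurwitz number of genus `g`:
`H⃗_g(α,β;s) = H⃗^r(α,β;s)` with `r = 2g - 2 + ℓ(α) + ℓ(β)`. -/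
noncomputable def hurwitzTwoLeg {d : ℕ} (g : ℕ) (α β : d.Partition) (s : ℕ) : ℕ :=
  Hcount d (2 * g + α.parts.card + β.parts.card - 2) s α β

/-- The connected monotone double Hurwitz number `H⃗_g(α,β)` of genus `g` (a single
monotone leg; taking `s = 0` makes the whole walk monotone). -/
noncomputable def hurwitzMonotone {d : ℕ} (g : ℕ) (α β : d.Partition) : ℕ :=
  Hcount d (2 * g + α.parts.card + β.parts.card - 2) 0 α β

/-- The Jucys–Murphy element `J_y = ∑_{x<y} (x y)` in `ℂ[S(d)]`. -/
noncomputable def JM (d : ℕ) (y : Fin d) : MonoidAlgebra ℂ (Equiv.Perm (Fin d)) :=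
  ∑ x ∈ Finset.Iio y, MonoidAlgebra.single (Equiv.swap x y) 1

/-- The conjugacy class sum `C_α`: the sum of all permutations of cycle type `α`. -/
noncomputable def classSum (d : ℕ) (α : d.Partition) :
    MonoidAlgebra ℂ (Equiv.Perm (Fin d)) :=
  ∑ σ ∈ Finset.univ.filter (fun σ : Equiv.Perm (Fin d) => HasCycleType σ α),
    MonoidAlgebra.single σ 1

/-- `h_k(J₁,…,J_d)`: the complete homogeneous symmetric polynomial of degree `k`
evaluated at the (commuting) Jucys–Murphy elements, i.e.
`∑_{y₁ ≤ … ≤ y_k} J_{y₁}⋯J_{y_k}`. -/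
noncomputable def hJM (d k : ℕ) : MonoidAlgebra ℂ (Equiv.Perm (Fin d)) :=
  ∑ f ∈ Finset.univ.filter (fun f : Fin k → Fin d => Monotone f),
    (List.ofFn (fun i => JM d (f i))).prod

lemma jm_ofFn_prod (d k : ℕ) (g : Fin k → Fin d) :
    (List.ofFn fun i => JM d (g i)).prod =
    ∑ x ∈ Fintype.piFinset (fun i => Finset.Iio (g i)),
      MonoidAlgebra.single ((List.ofFn fun i => Equiv.swap (x i) (g i)).prod) 1 := by
  induction k with
  | zero =>
      simp [MonoidAlgebra.one_def]
  | succ k ih =>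
      rw [List.ofFn_succ, List.prod_cons, ih (fun i => g i.succ)]
      show JM d (g 0) * _ = _
      rw [JM, Finset.sum_mul_sum]
      rw [← Finset.sum_product']
      refine Finset.sum_nbij' (fun p => Fin.cons p.1 p.2) (fun x => (x 0, Fin.tail x)) ?_ ?_ ?_ ?_ ?_
      · intro p hp
        simp only [Finset.mem_product, Fintype.mem_piFinset] at hp ⊢
        intro i
        refine Fin.cases ?_ ?_ i
        · simpa using hp.1
        · intro j; simpa using hp.2 j
      · intro x hx
        simp only [Fintype.mem_piFinset, Finset.mem_product] at hx ⊢
        exact ⟨hx 0, fun j => hx j.succ⟩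
      · intro p hp; simp
      · intro x hx; simp [Fin.cons_self_tail]
      · intro p hp
        rw [MonoidAlgebra.single_mul_single, mul_one]
        congr 1
        rw [List.ofFn_succ, List.prod_cons]
        simp

lemma hJM_eq (d k : ℕ) : hJM d k =
    ∑ τ ∈ Finset.univ.filter
      (fun τ : Fin k → Fin d × Fin d => (∀ i, (τ i).1 < (τ i).2) ∧ Monotone fun i => (τ i).2),
      MonoidAlgebra.single ((List.ofFn fun i => Equiv.swap (τ i).1 (τ i).2).prod) 1 := by
  rw [hJM]
  simp only [jm_ofFn_prod]
  rw [Finset.sum_sigma']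
  refine Finset.sum_nbij' (fun p => fun i => (p.2 i, p.1 i))
    (fun τ => ⟨fun i => (τ i).2, fun i => (τ i).1⟩) ?_ ?_ ?_ ?_ ?_
  · intro p hp
    simp only [Finset.mem_sigma, Finset.mem_filter, Finset.mem_univ, true_and,
      Fintype.mem_piFinset, Finset.mem_Iio] at hp ⊢
    exact ⟨fun i => hp.2 i, hp.1⟩
  · intro τ hτ
    simp only [Finset.mem_sigma, Finset.mem_filter, Finset.mem_univ, true_and,
      Fintype.mem_piFinset, Finset.mem_Iio] at hτ ⊢
    exact ⟨hτ.2, fun i => hτ.1 i⟩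
  · intro p hp; rfl
  · intro τ hτ; rfl
  · intro p hp; rfl

lemma hct_inv {d : ℕ} (σ : Equiv.Perm (Fin d)) (α : d.Partition) :
    HasCycleType σ⁻¹ α ↔ HasCycleType σ α := by
  simp [HasCycleType, Equiv.Perm.cycleType_inv]

lemma revprod {d n : ℕ} (τ : Fin n → Fin d × Fin d) :
    (List.ofFn fun i => Equiv.swap (τ i).1 (τ i).2).reverse.prod =
    ((List.ofFn fun i => Equiv.swap (τ i).1 (τ i).2).prod)⁻¹ := by
  have h : (List.map (fun x => x⁻¹) (List.ofFn fun i => Equiv.swap (τ i).1 (τ i).2)) =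
      List.ofFn fun i => Equiv.swap (τ i).1 (τ i).2 := by
    simp [List.map_ofFn, Function.comp_def, Equiv.swap_inv]
  rw [List.prod_inv_reverse, h]

lemma prod_split {d s t : ℕ} (τ : Fin (s + t) → Fin d × Fin d) :
    (List.ofFn fun i => Equiv.swap (τ i).1 (τ i).2).prod =
    (List.ofFn fun i : Fin s => Equiv.swap ((τ (Fin.castAdd t i)).1) ((τ (Fin.castAdd t i)).2)).prod *
    (List.ofFn fun i : Fin t => Equiv.swap ((τ (Fin.natAdd s i)).1) ((τ (Fin.natAdd s i)).2)).prod := by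
  rw [List.ofFn_add, List.prod_append]
  rfl

lemma sum_app {ι G : Type*} [Group G] (S : Finset ι) (f : ι → MonoidAlgebra ℂ G) (x : G) :
    (∑ i ∈ S, f i).coeff x = ∑ i ∈ S, (f i).coeff x := by
  rw [MonoidAlgebra.coeff_sum, Finset.sum_apply']

set_option maxHeartbeats 2000000 in
/-- **Two-legged monotone walks as coefficients in the group algebra** (Step Four).
Let `d ≥ 1`, `α, β ⊢ d`, and `0 ≤ s ≤ r`. The coefficient of the identity permutation
in `C_α · h_s(J₁,…,J_d) · h_{r−s}(J₁,…,J_d) · C_β ∈ ℂ[S(d)]` equals `W⃗^r(α,β;s)`, the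
number of two-legged monotone `r`-step walks from cycle type `α` to cycle type `β` with
reset at time `s`. -/
theorem coeff_one_classSum_hJM (d : ℕ) (hd : 1 ≤ d) (α β : d.Partition)
    (r s : ℕ) (hs : s ≤ r) :
    (classSum d α * hJM d s * hJM d (r - s) * classSum d β).coeff (1 : Equiv.Perm (Fin d))
      = (Wcount d r s α β : ℂ) := by
  obtain ⟨t, rfl⟩ : ∃ t, r = s + t := ⟨r - s, (Nat.add_sub_cancel' hs).symm⟩
  have hts : s + t - s = t := by omega
  rw [hts]
  rw [classSum, classSum, hJM_eq, hJM_eq]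
  simp only [Finset.sum_mul, Finset.mul_sum, MonoidAlgebra.single_mul_single, one_mul, mul_one]
  simp only [sum_app]
  simp only [MonoidAlgebra.coeff_single, Finsupp.single_apply]
  simp only [← Finset.sum_product']
  rw [Finset.sum_boole]
  rw [Wcount, Nat.card_eq_fintype_card, Fintype.card_subtype]
  rw [Nat.cast_inj]
  refine Finset.card_nbij'
    (fun q => (q.2.2.2⁻¹, Fin.append q.2.2.1 q.2.1))
    (fun w => ((List.ofFn fun i => Equiv.swap (w.2 i).1 (w.2 i).2).reverse.prod * w.1,
      fun i => w.2 (Fin.natAdd s i), fun i => w.2 (Fin.castAdd t i), w.1⁻¹))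
    ?_ ?_ ?_ ?_
  · rintro ⟨π, τ₂, τ₁, σ⟩ hq
    simp only [Finset.mem_coe, Finset.mem_filter, Finset.mem_product, Finset.mem_univ, true_and] at hq
    obtain ⟨⟨hπ, hτ₂, hτ₁, hσ⟩, hprod⟩ := hq
    have hπeq : ((List.ofFn fun i : Fin s => Equiv.swap (τ₁ i).1 (τ₁ i).2).prod *
        (List.ofFn fun i : Fin t => Equiv.swap (τ₂ i).1 (τ₂ i).2).prod)⁻¹ * σ⁻¹ = π := by
      rw [← inv_eq_of_mul_eq_one_right hprod]; group
    have hlift : (List.ofFn fun i : Fin (s+t) =>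
        Equiv.swap ((Fin.append τ₁ τ₂ i).1) ((Fin.append τ₁ τ₂ i).2)).reverse.prod * σ⁻¹ = π := by
      rw [revprod, prod_split]
      simp only [Fin.append_left, Fin.append_right]
      exact hπeq
    simp only [Finset.mem_coe, Finset.mem_filter, Finset.mem_univ, true_and]
    refine ⟨(hct_inv σ α).2 hσ, ?_, ?_, ?_⟩
    · intro i
      by_cases hi : (i : ℕ) < s
      · have e1 : i = Fin.castAdd t ⟨(i : ℕ), hi⟩ := Fin.ext rfl
        rw [e1]; simp only [Fin.append_left]; exact hτ₁.1 _
      · have e1 : i = Fin.natAdd s ⟨(i : ℕ) - s, by omega⟩ := Fin.ext (by simp; omega)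
        rw [e1]; simp only [Fin.append_right]; exact hτ₂.1 _
    · intro i j hij hcase
      have hij' : (i : ℕ) ≤ (j : ℕ) := hij
      rcases hcase with hj | hi
      · have hi : (i : ℕ) < s := lt_of_le_of_lt hij' hj
        have e1 : i = Fin.castAdd t ⟨(i : ℕ), hi⟩ := Fin.ext rfl
        have e2 : j = Fin.castAdd t ⟨(j : ℕ), hj⟩ := Fin.ext rfl
        rw [e1, e2]; simp only [Fin.append_left]
        exact hτ₁.2 (show (⟨(i : ℕ), hi⟩ : Fin s) ≤ ⟨(j : ℕ), hj⟩ from hij')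
      · have hj : s ≤ (j : ℕ) := le_trans hi hij'
        have e1 : i = Fin.natAdd s ⟨(i : ℕ) - s, by omega⟩ := Fin.ext (by simp; omega)
        have e2 : j = Fin.natAdd s ⟨(j : ℕ) - s, by omega⟩ := Fin.ext (by simp; omega)
        rw [e1, e2]; simp only [Fin.append_right]
        exact hτ₂.2 (show (⟨(i : ℕ) - s, _⟩ : Fin t) ≤ ⟨(j : ℕ) - s, _⟩ by
          simp only [Fin.mk_le_mk]; omega)
    · rw [hlift]; exact hπ
  · rintro ⟨σw, τ⟩ hw
    simp only [Finset.mem_coe, Finset.mem_filter, Finset.mem_univ, true_and] at hw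
    obtain ⟨h1, h2, h3, h4⟩ := hw
    simp only [Finset.mem_coe, Finset.mem_filter, Finset.mem_product, Finset.mem_univ, true_and]
    constructor
    · refine ⟨h4, ⟨fun i => h2 _, ?_⟩, ⟨fun i => h2 _, ?_⟩, (hct_inv σw α).2 h1⟩
      · intro i j hij
        exact h3 (Fin.natAdd s i) (Fin.natAdd s j)
          (by rw [Fin.le_def]; exact Nat.add_le_add_left hij s)
          (Or.inr (Nat.le_add_right s i))
      · intro i j hij
        exact h3 (Fin.castAdd t i) (Fin.castAdd t j)
          (by rw [Fin.le_def]; exact hij) (Or.inl j.isLt)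
    · rw [revprod τ]
      have hsplit := prod_split τ
      rw [hsplit]
      group
  · rintro ⟨π, τ₂, τ₁, σ⟩ hq
    simp only [Finset.mem_coe, Finset.mem_filter, Finset.mem_product, Finset.mem_univ, true_and] at hq
    obtain ⟨⟨hπ, hτ₂, hτ₁, hσ⟩, hprod⟩ := hq
    have hπeq : ((List.ofFn fun i : Fin s => Equiv.swap (τ₁ i).1 (τ₁ i).2).prod *
        (List.ofFn fun i : Fin t => Equiv.swap (τ₂ i).1 (τ₂ i).2).prod)⁻¹ * σ⁻¹ = π := by
      rw [← inv_eq_of_mul_eq_one_right hprod]; group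
    have hlift : (List.ofFn fun i : Fin (s+t) =>
        Equiv.swap ((Fin.append τ₁ τ₂ i).1) ((Fin.append τ₁ τ₂ i).2)).reverse.prod * σ⁻¹ = π := by
      rw [revprod, prod_split]
      simp only [Fin.append_left, Fin.append_right]
      exact hπeq
    refine Prod.ext hlift (Prod.ext ?_ (Prod.ext ?_ (inv_inv σ)))
    · funext i
      show Fin.append τ₁ τ₂ (Fin.natAdd s i) = τ₂ i
      exact Fin.append_right τ₁ τ₂ i
    · funext i
      show Fin.append τ₁ τ₂ (Fin.castAdd t i) = τ₁ i
      exact Fin.append_left τ₁ τ₂ i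
  · rintro ⟨σw, τ⟩ hw
    refine Prod.ext (inv_inv σw) ?_
    show Fin.append (fun i => τ (Fin.castAdd t i)) (fun i => τ (Fin.natAdd s i)) = τ
    exact Fin.append_castAdd_natAdd

end
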